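/- Let G = (V, E) be a digraph containing vertices v_1,…,v_l such that the set F = {u ∈ V : (v_i,u) ∈ E for all i} induces a loopless triangle (i.e., F = {a,b,c} with a,b,c distinct, (x,y) ∈ E for all distinct x,y ∈ F, and (x,x) ∉ E for all x ∈ F). Let H be an undirected graph, and let H' be the digraph on V(H) ∪ {w_1,…,w_l} (new vertices) with edges {(u,v), (v,u) : {u,v} ∈ E(H)} ∪ {(w_i, u) : 1 ≤ i ≤ l, u ∈ V(H)}. Then the partial map f(w_i) = v_i extends to a digraph homomorphism H' → G if and only if H is 3-colorable. -/
import Mathlib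

open Classical in
private lemma aux_ne_color {V : Type} (a b c : V) (hab : a ≠ b) (hbc : b ≠ c) (hac : a ≠ c)
    (x y : V) (hx : x ∈ ({a, b, c} : Set V)) (hy : y ∈ ({a, b, c} : Set V)) (hxy : x ≠ y) :
    (if x = a then (0 : Fin 3) else if x = b then 1 else 2) ≠
      (if y = a then (0 : Fin 3) else if y = b then 1 else 2) := by
  rcases hx with rfl | rfl | rfl <;> rcases hy with rfl | rfl | rfl <;>
    first
      | exact absurd rfl hxy
      | simp [hab, hbc, hac, Ne.symm hab, Ne.symm hbc, Ne.symm hac]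

private lemma aux_color_ne {V : Type} (a b c : V) (hab : a ≠ b) (hbc : b ≠ c) (hac : a ≠ c)
    (x y : Fin 3) (hxy : x ≠ y) :
    (if x = 0 then a else if x = 1 then b else c) ≠
      (if y = 0 then a else if y = 1 then b else c) := by
  fin_cases x <;> fin_cases y <;>
    first
      | exact absurd rfl hxy
      | simp [hab, hbc, hac, Ne.symm hab, Ne.symm hbc, Ne.symm hac]

private lemma aux_color_mem {V : Type} (a b c : V) (x : Fin 3) :
    (if x = 0 then a else if x = 1 then b else c) ∈ ({a, b, c} : Set V) := by
  split_ifs <;> simp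

/-- if a digraph `G = (V, E)` has vertices `v 1, …, v l` such that
`F = {u | ∀ i, E (v i) u}` induces a loopless triangle `{a,b,c}`, then for any simple
graph `H`, the partial map `wᵢ ↦ vᵢ` on the gadget digraph `H'` (symmetrized `H`
plus new vertices `w 1, …, w l` with all edges `(wᵢ, u)`, `u ∈ V(H)`) extends to
a digraph homomorphism `H' → G` iff `H` is 3-colorable. -/
theorem stmt9 {V : Type} (E : V → V → Prop) (l : ℕ) (v : Fin l → V)
    (a b c : V) (hab : a ≠ b) (hbc : b ≠ c) (hac : a ≠ c)
    (hF : {u : V | ∀ i, E (v i) u} = {a, b, c})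
    (htri : ∀ x ∈ ({a, b, c} : Set V), ∀ y ∈ ({a, b, c} : Set V), E x y ↔ x ≠ y)
    {β : Type} (H : SimpleGraph β)
    (E' : β ⊕ Fin l → β ⊕ Fin l → Prop)
    (hE' : ∀ x y, E' x y ↔
      ((∃ u w, H.Adj u w ∧ x = Sum.inl u ∧ y = Sum.inl w) ∨
       (∃ i u, x = Sum.inr i ∧ y = Sum.inl u))) :
    (∃ g : β ⊕ Fin l → V,
        (∀ x y, E' x y → E (g x) (g y)) ∧ (∀ i : Fin l, g (Sum.inr i) = v i)) ↔
      H.Colorable 3 := by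
  classical
  constructor
  · rintro ⟨g, hg, hgw⟩
    have hmem : ∀ u : β, g (Sum.inl u) ∈ ({a, b, c} : Set V) := by
      intro u
      rw [← hF]
      intro i
      have h1 : E' (Sum.inr i) (Sum.inl u) := (hE' _ _).mpr (Or.inr ⟨i, u, rfl, rfl⟩)
      have h2 := hg _ _ h1
      rwa [hgw i] at h2
    refine ⟨⟨fun u => if g (Sum.inl u) = a then 0 else if g (Sum.inl u) = b then 1 else 2, ?_⟩⟩
    intro u w huw
    have hne : g (Sum.inl u) ≠ g (Sum.inl w) := by
      have hEuw : E (g (Sum.inl u)) (g (Sum.inl w)) :=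
        hg _ _ ((hE' _ _).mpr (Or.inl ⟨u, w, huw, rfl, rfl⟩))
      exact (htri _ (hmem u) _ (hmem w)).mp hEuw
    exact aux_ne_color a b c hab hbc hac _ _ (hmem u) (hmem w) hne
  · rintro ⟨C⟩
    refine ⟨Sum.elim (fun u => if C u = 0 then a else if C u = 1 then b else c) v,
      ?_, fun i => rfl⟩
    intro x y hxy
    rcases (hE' _ _).mp hxy with ⟨u, w, huw, rfl, rfl⟩ | ⟨i, u, rfl, rfl⟩
    · simp only [Sum.elim_inl]
      rw [htri _ (aux_color_mem a b c _) _ (aux_color_mem a b c _)]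
      exact aux_color_ne a b c hab hbc hac _ _ (C.valid huw)
    · simp only [Sum.elim_inl, Sum.elim_inr]
      have h : (if C u = 0 then a else if C u = 1 then b else c) ∈
          {u : V | ∀ i, E (v i) u} := by
        rw [hF]; exact aux_color_mem a b c _
      exact h i
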